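/- Let R = k[x^a, x^{p_1}y^{q_1}, ..., x^{p_t}y^{q_t}, y^b] and let H be the subgroup of (ℤ/aℤ) ⊕ (ℤ/bℤ) generated by the classes of (p_1,q_1),...,(p_t,q_t). Then the multiplicity of the ideal (x^a, y^b) in R equals |H|. -/

import Mathlib

open MvPolynomial

set_option synthInstance.maxHeartbeats 1000000
set_option maxHeartbeats 2000000


/-- `DnZ W n p` : `p` can be lowered by a total of `n` unit steps staying in `W`. -/
def DnZ (W : Set (ℤ × ℤ)) (n : ℕ) (p : ℤ × ℤ) : Prop :=
  ∃ i j : ℕ, i + j = n ∧ ((p.1 - i, p.2 - j) ∈ W)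

theorem coreStair (W : Set (ℤ × ℤ)) (A : ℤ)
    (h1 : ∀ p ∈ W, (p.1 + 1, p.2) ∈ W)
    (h2 : ∀ p ∈ W, (p.1, p.2 + 1) ∈ W)
    (hA : ∀ p ∈ W, A ≤ p.1 ∧ A ≤ p.2)
    (hne : W.Nonempty) :
    (∀ n : ℕ, {p ∈ W | ¬ DnZ W n p}.Finite) ∧
    ∃ C : ℤ, ∃ N : ℕ, ∀ n : ℕ, N ≤ n →
      {p ∈ W | DnZ W n p ∧ ¬ DnZ W (n+1) p}.Finite ∧
      ({p ∈ W | DnZ W n p ∧ ¬ DnZ W (n+1) p}.ncard : ℤ) = (n : ℤ) + 1 + C := by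
  classical
  -- upward closure
  have hupx : ∀ (i : ℕ) (p : ℤ × ℤ), p ∈ W → ((p.1 + i, p.2) ∈ W) := by
    intro i
    induction i with
    | zero => intro p hp; simpa using hp
    | succ m ih =>
        intro p hp
        have := h1 _ (ih p hp)
        simpa [add_assoc] using this
  have hupy : ∀ (j : ℕ) (p : ℤ × ℤ), p ∈ W → ((p.1, p.2 + j) ∈ W) := by
    intro j
    induction j with
    | zero => intro p hp; simpa using hp
    | succ m ih =>
        intro p hp
        have := h2 _ (ih p hp)
        simpa [add_assoc] using this
  have hup : ∀ p ∈ W, ∀ q : ℤ × ℤ, p.1 ≤ q.1 → p.2 ≤ q.2 → q ∈ W := by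
    intro p hp q hx hy
    obtain ⟨i, hi⟩ := Int.le.dest hx
    obtain ⟨j, hj⟩ := Int.le.dest hy
    have := hupy j _ (hupx i p hp)
    simpa [hi, hj] using this
  -- least nonempty column x0
  obtain ⟨q0, hq0⟩ := hne
  obtain ⟨x0, hx0ne, hx0min⟩ :=
    Int.exists_least_of_bdd (P := fun x => ∃ y, (x, y) ∈ W)
      ⟨A, fun z ⟨y, hy⟩ => (hA _ hy).1⟩ ⟨q0.1, q0.2, hq0⟩
  -- column minima r
  have hrex : ∀ x : ℤ, ∃ rx : ℤ, x0 ≤ x → ((x, rx) ∈ W ∧ ∀ y, (x, y) ∈ W → rx ≤ y) := by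
    intro x
    by_cases hx : x0 ≤ x
    · obtain ⟨y0, hy0⟩ := hx0ne
      have hcolne : ∃ y, (x, y) ∈ W := ⟨y0, hup _ hy0 _ hx le_rfl⟩
      obtain ⟨rx, hrx1, hrx2⟩ :=
        Int.exists_least_of_bdd (P := fun y => (x, y) ∈ W)
          ⟨A, fun z hz => (hA _ hz).2⟩ hcolne
      exact ⟨rx, fun _ => ⟨hrx1, hrx2⟩⟩
    · exact ⟨0, fun h => absurd h hx⟩
  choose r hr using hrex
  have hrW : ∀ x, x0 ≤ x → (x, r x) ∈ W := fun x hx => (hr x hx).1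
  have hrmin : ∀ x, x0 ≤ x → ∀ y, (x, y) ∈ W → r x ≤ y := fun x hx => (hr x hx).2
  have hcol : ∀ x y, x0 ≤ x → ((x, y) ∈ W ↔ r x ≤ y) := by
    intro x y hx
    exact ⟨fun h => hrmin x hx y h, fun h => hup _ (hrW x hx) (x, y) le_rfl h⟩
  have hranti : ∀ x x', x0 ≤ x → x ≤ x' → r x' ≤ r x := by
    intro x x' hx hxx'
    exact hrmin x' (hx.trans hxx') _ (hup _ (hrW x hx) (x', r x) hxx' le_rfl)
  have hrA : ∀ x, x0 ≤ x → A ≤ r x := fun x hx => (hA _ (hrW x hx)).2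
  -- eventual constancy of r : choose X ≥ x0 with r x = v for all x ≥ X
  obtain ⟨v, ⟨X, hXx0, hXv⟩, hvle⟩ :=
    Int.exists_least_of_bdd (P := fun w => ∃ x, x0 ≤ x ∧ r x = w)
      ⟨A, fun z ⟨x, hx, hxz⟩ => hxz ▸ hrA x hx⟩ ⟨r x0, x0, le_rfl, rfl⟩
  have hrconst : ∀ x, X ≤ x → r x = v := by
    intro x hx
    have h1' : r x ≤ v := hXv ▸ hranti X x hXx0 hx
    have h2' : v ≤ r x := hvle _ ⟨x, hXx0.trans hx, rfl⟩
    exact le_antisymm h1' h2'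
  have hrv : ∀ x, x0 ≤ x → v ≤ r x := fun x hx => hvle _ ⟨x, hx, rfl⟩
  -- the diagonal level function s
  set s : ℤ → ℤ := fun z => z + r z with hs
  -- least value of s on [lo, hi] (meaningful whenever x0 ≤ lo ≤ hi)
  have hlmex : ∀ lo hi : ℤ, ∃ m : ℤ, x0 ≤ lo → lo ≤ hi →
      ((∃ z, lo ≤ z ∧ z ≤ hi ∧ s z = m) ∧ ∀ z, lo ≤ z → z ≤ hi → m ≤ s z) := by
    intro lo hi
    by_cases hlh : x0 ≤ lo ∧ lo ≤ hi
    · obtain ⟨hl, hh⟩ := hlh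
      obtain ⟨m, hm1, hm2⟩ :=
        Int.exists_least_of_bdd (P := fun m => ∃ z, lo ≤ z ∧ z ≤ hi ∧ s z = m)
          ⟨x0 + A, by
            rintro m ⟨z, hz1, hz2, rfl⟩
            have h1' : x0 ≤ z := hl.trans hz1
            have h2' := hrA z h1'
            simp only [hs]
            omega⟩
          ⟨s lo, lo, le_rfl, hh, rfl⟩
      exact ⟨m, fun _ _ => ⟨hm1, fun z hz1 hz2 => hm2 _ ⟨z, hz1, hz2, rfl⟩⟩⟩
    · exact ⟨0, fun h1 h2 => absurd ⟨h1, h2⟩ hlh⟩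
  choose lmin hlmin using hlmex
  have lm1 : ∀ lo hi, x0 ≤ lo → lo ≤ hi → ∃ z, lo ≤ z ∧ z ≤ hi ∧ s z = lmin lo hi :=
    fun lo hi h1 h2 => (hlmin lo hi h1 h2).1
  have lm2 : ∀ lo hi, x0 ≤ lo → lo ≤ hi → ∀ z, lo ≤ z → z ≤ hi → lmin lo hi ≤ s z :=
    fun lo hi h1 h2 => (hlmin lo hi h1 h2).2
  -- s is affine past X
  have hsX : ∀ z, X ≤ z → s z = z + v := fun z hz => by simp only [hs, hrconst z hz]
  -- lmin ≥ lo + v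
  have lmge : ∀ lo hi, x0 ≤ lo → lo ≤ hi → lo + v ≤ lmin lo hi := by
    intro lo hi h1 h2
    obtain ⟨z, hz1, hz2, hz3⟩ := lm1 lo hi h1 h2
    have := hrv z (h1.trans hz1)
    simp only [hs] at hz3
    omega
  -- lmin over an interval containing X truncates at X
  have lmtrunc : ∀ lo hi, x0 ≤ lo → lo ≤ X → X ≤ hi → lmin lo hi = lmin lo X := by
    intro lo hi hl hX1 hX2
    have hlh : lo ≤ hi := hX1.trans hX2
    apply le_antisymm
    · obtain ⟨z, hz1, hz2, hz3⟩ := lm1 lo X hl hX1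
      exact hz3 ▸ lm2 lo hi hl hlh z hz1 (hz2.trans hX2)
    · obtain ⟨z, hz1, hz2, hz3⟩ := lm1 lo hi hl hlh
      rw [← hz3]
      rcases le_or_gt z X with h | h
      · exact lm2 lo X hl hX1 z hz1 h
      · have h1' : lmin lo X ≤ s X := lm2 lo X hl hX1 X hX1 le_rfl
        have h2' : s X = X + v := hsX X le_rfl
        have h3' : s z = z + v := hsX z h.le
        omega
  -- lmin over an interval past X is the left endpoint value
  have lmright : ∀ lo hi, X ≤ lo → lo ≤ hi → lmin lo hi = lo + v := by
    intro lo hi hl hlh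
    have hl0 : x0 ≤ lo := hXx0.trans hl
    apply le_antisymm
    · have := lm2 lo hi hl0 hlh lo le_rfl hlh
      rwa [hsX lo hl] at this
    · obtain ⟨z, hz1, hz2, hz3⟩ := lm1 lo hi hl0 hlh
      rw [← hz3, hsX z (hl.trans hz1)]
      omega
  -- window bottoms
  have hbot1 : ∀ (x : ℤ) (n : ℕ), x0 ≤ x → x0 ≤ max x0 (x - n) := fun x n _ => le_max_left _ _
  have hbot2 : ∀ (x : ℤ) (n : ℕ), x0 ≤ x → max x0 (x - n) ≤ x := by
    intro x n hx
    refine max_le hx (by omega)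
  -- the Dn characterization
  have hDn : ∀ (n : ℕ) (x y : ℤ), x0 ≤ x → r x ≤ y →
      (DnZ W n (x, y) ↔ (n : ℤ) ≤ y + x - lmin (max x0 (x - n)) x) := by
    intro n x y hx hy
    constructor
    · rintro ⟨i, j, hij, hmem⟩
      simp only at hmem
      have hxz : x0 ≤ x - i := hx0min _ ⟨y - j, hmem⟩
      have h1' : r (x - (i:ℤ)) ≤ y - j := (hcol _ _ hxz).mp hmem
      have hijZ : (i : ℤ) + j = n := by exact_mod_cast hij
      have h2' : lmin (max x0 (x - n)) x ≤ s (x - i) :=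
        lm2 _ _ (hbot1 x n hx) (hbot2 x n hx) _ (max_le hxz (by omega)) (by omega)
      simp only [hs] at h2'
      omega
    · intro hn
      obtain ⟨z, hz1, hz2, hz3⟩ := lm1 _ _ (hbot1 x n hx) (hbot2 x n hx)
      have hzx0 : x0 ≤ z := le_trans (le_max_left _ _) hz1
      have hzn : x - n ≤ z := le_trans (le_max_right _ _) hz1
      have hi : ((x - z).toNat : ℤ) = x - z := Int.toNat_of_nonneg (by omega)
      have hile : (x - z).toNat ≤ n := by omega
      refine ⟨(x - z).toNat, n - (x - z).toNat, by omega, ?_⟩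
      simp only [hs] at hz3
      have hco1 : x - ((x - z).toNat : ℤ) = z := by omega
      have hco2 : r z ≤ y - ((n - (x - z).toNat : ℕ) : ℤ) := by
        have : ((n - (x - z).toNat : ℕ) : ℤ) = (n : ℤ) - (x - z) := by
          push_cast [hile]; omega
        omega
      rw [hco1]
      exact (hcol _ _ hzx0).mpr hco2
  -- membership in W forces x ≥ x0 and y ≥ r x
  have hWx : ∀ p : ℤ × ℤ, p ∈ W → x0 ≤ p.1 ∧ r p.1 ≤ p.2 := by
    intro p hp
    have h1' : x0 ≤ p.1 := hx0min _ ⟨p.2, hp⟩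
    exact ⟨h1', hrmin _ h1' _ hp⟩
  -- Finiteness of the complements (first conclusion)
  have hFin : ∀ n : ℕ, {p ∈ W | ¬ DnZ W n p}.Finite := by
    intro n
    apply Set.Finite.subset (Set.Finite.prod (Set.finite_Icc x0 (X + n)) (Set.finite_Icc A (n + r x0)))
    rintro ⟨x, y⟩ ⟨hpW, hpD⟩
    obtain ⟨hx, hy⟩ := hWx _ hpW
    dsimp only at hx hy
    have hyA : A ≤ y := (hA _ hpW).2
    have hchar : ¬ ((n : ℤ) ≤ y + x - lmin (max x0 (x - n)) x) :=
      fun h => hpD ((hDn n x y hx hy).mpr h)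
    push_neg at hchar
    -- y bound : lmin ≤ s x so y < n + r x ≤ n + r x0
    have h3' : lmin (max x0 (x - n)) x ≤ s x :=
      lm2 _ _ (hbot1 x n hx) (hbot2 x n hx) x (hbot2 x n hx) le_rfl
    have h4' : r x ≤ r x0 := hranti x0 x le_rfl hx
    have hybd : y ≤ n + r x0 := by simp only [hs] at h3'; omega
    -- x bound : if x > X + n then Dn holds
    have hxbd : x ≤ X + n := by
      by_contra hgt
      push_neg at hgt
      have hXxn : X ≤ x - n := by omega
      have hmax : max x0 (x - n) = x - n := max_eq_right (by omega)
      have := lmright (x - n) x hXxn (by omega)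
      rw [hmax, this] at hchar
      have hrx : r x = v := hrconst x (by omega)
      omega
    exact ⟨Set.mem_Icc.mpr ⟨hx, hxbd⟩, Set.mem_Icc.mpr ⟨hyA, hybd⟩⟩
  refine ⟨hFin, ?_⟩
  -- the constant
  set Qs : Set ℤ := {w ∈ Set.Ioc x0 X | lmin (w - 1) X = lmin w X ∧ w + v ≤ lmin w X} with hQs
  have hQsfin : Qs.Finite := Set.Finite.subset (Set.finite_Ioc x0 X) (fun w hw => hw.1)
  refine ⟨(Qs.ncard : ℤ), (max (X + r x0 - x0 - A) (X - x0)).toNat, ?_⟩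
  intro n hn
  have hnmax : max (X + r x0 - x0 - A) (X - x0) ≤ (n : ℤ) := by
    calc max (X + r x0 - x0 - A) (X - x0) ≤ ((max (X + r x0 - x0 - A) (X - x0)).toNat : ℤ) :=
          Int.self_le_toNat _
      _ ≤ (n : ℤ) := by exact_mod_cast hn
  have hnB : X + r x0 - x0 - A ≤ (n : ℤ) := le_trans (le_max_left _ _) hnmax
  have hnX : X - x0 ≤ (n : ℤ) := le_trans (le_max_right _ _) hnmax
  have hvA : A ≤ v := hXv ▸ hrA X hXx0
  -- the key equivalence for the column condition
  have hcondiff : ∀ x : ℤ, x0 ≤ x →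
      ((lmin (max x0 (x - (n:ℤ) - 1)) x = lmin (max x0 (x - (n:ℤ))) x ∧
          x + r x - lmin (max x0 (x - (n:ℤ))) x ≤ (n:ℤ))
        ↔ (x ∈ Set.Icc x0 (x0 + (n:ℤ)) ∪ (fun w => w + (n:ℤ)) '' Qs)) := by
    intro x hx
    rcases le_or_gt x (x0 + (n:ℤ)) with hle | hgt
    · have hm1 : max x0 (x - (n:ℤ)) = x0 := max_eq_left (by omega)
      have hm2 : max x0 (x - (n:ℤ) - 1) = x0 := max_eq_left (by omega)
      rw [hm1, hm2]
      simp only [Set.mem_union, Set.mem_Icc]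
      constructor
      · exact fun _ => Or.inl ⟨hx, hle⟩
      · intro _
        refine ⟨by trivial, ?_⟩
        rcases le_or_gt x X with hxX | hxX
        · have h1' : x0 + v ≤ lmin x0 x := lmge x0 x le_rfl hx
          have h2' : r x ≤ r x0 := hranti x0 x le_rfl hx
          omega
        · have h1' : lmin x0 x = lmin x0 X := lmtrunc x0 x le_rfl hXx0 hxX.le
          have h2' : x0 + v ≤ lmin x0 X := lmge x0 X le_rfl hXx0
          have h3' : r x = v := hrconst x hxX.le
          omega
    · rcases le_or_gt x (X + (n:ℤ)) with hX2 | hX2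
      · -- middle range
        have hXx : X ≤ x := by omega
        have hm1 : max x0 (x - (n:ℤ)) = x - (n:ℤ) := max_eq_right (by omega)
        have hm2 : max x0 (x - (n:ℤ) - 1) = x - (n:ℤ) - 1 := max_eq_right (by omega)
        have ht1 : lmin (x - (n:ℤ)) x = lmin (x - (n:ℤ)) X := lmtrunc _ _ (by omega) (by omega) hXx
        have ht2 : lmin (x - (n:ℤ) - 1) x = lmin (x - (n:ℤ) - 1) X :=
          lmtrunc _ _ (by omega) (by omega) hXx
        have hsx : r x = v := hrconst x hXx
        rw [hm1, hm2, ht1, ht2, hsx]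
        simp only [Set.mem_union, Set.mem_Icc, Set.mem_image, hQs, Set.mem_setOf_eq, Set.mem_Ioc]
        constructor
        · rintro ⟨he, hle⟩
          refine Or.inr ⟨x - (n:ℤ), ⟨⟨by omega, by omega⟩, ?_, by omega⟩, by omega⟩
          convert he using 3 <;> ring
        · rintro (⟨_, h⟩ | ⟨w, ⟨⟨hw1, hw2⟩, hq1, hq2⟩, hwx⟩)
          · omega
          · have hwn : w = x - (n:ℤ) := by omega
            subst hwn
            constructor
            · convert hq1 using 3 <;> ring
            · omega
      · -- far right range : condition fails
        have hm1 : max x0 (x - (n:ℤ)) = x - (n:ℤ) := max_eq_right (by omega)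
        have hm2 : max x0 (x - (n:ℤ) - 1) = x - (n:ℤ) - 1 := max_eq_right (by omega)
        have h1' : lmin (x - (n:ℤ)) x = (x - (n:ℤ)) + v := lmright _ _ (by omega) (by omega)
        have h2' : lmin (x - (n:ℤ) - 1) x = (x - (n:ℤ) - 1) + v := lmright _ _ (by omega) (by omega)
        rw [hm1, hm2, h1', h2']
        simp only [Set.mem_union, Set.mem_Icc, Set.mem_image, hQs, Set.mem_setOf_eq, Set.mem_Ioc]
        constructor
        · rintro ⟨he, _⟩; omega
        · rintro (⟨_, h⟩ | ⟨w, ⟨⟨hw1, hw2⟩, _, _⟩, hwx⟩) <;> omega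
  -- description of the level set
  have hE : {p ∈ W | DnZ W n p ∧ ¬ DnZ W (n+1) p} =
      (fun x : ℤ => (x, lmin (max x0 (x - (n:ℤ))) x + (n:ℤ) - x)) ''
        (Set.Icc x0 (x0 + (n:ℤ)) ∪ (fun w => w + (n:ℤ)) '' Qs) := by
    ext ⟨x, y⟩
    simp only [Set.mem_setOf_eq, Set.mem_image]
    constructor
    · rintro ⟨hpW, hDnn, hDnn1⟩
      obtain ⟨hx, hy⟩ := hWx _ hpW
      dsimp only at hx hy
      have hc1 := (hDn n x y hx hy).mp hDnn
      have hc2 : ¬ (((n+1 : ℕ) : ℤ) ≤ y + x - lmin (max x0 (x - ((n+1:ℕ):ℤ))) x) :=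
        fun h => hDnn1 ((hDn (n+1) x y hx hy).mpr h)
      push_cast at hc2
      rw [show x - ((n:ℤ) + 1) = x - (n:ℤ) - 1 from by ring] at hc2
      have hmono : lmin (max x0 (x - (n:ℤ) - 1)) x ≤ lmin (max x0 (x - (n:ℤ))) x := by
        obtain ⟨z, hz1, hz2, hz3⟩ := lm1 _ _ (hbot1 x n hx) (hbot2 x n hx)
        rw [← hz3]
        refine lm2 _ _ (le_max_left _ _) (max_le hx (by omega)) z ?_ hz2
        have hz1' : x - (n:ℤ) ≤ z := le_trans (le_max_right _ _) hz1
        have hz0' : x0 ≤ z := le_trans (le_max_left _ _) hz1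
        exact max_le hz0' (by omega)
      have hyeq : y = lmin (max x0 (x - (n:ℤ))) x + (n:ℤ) - x := by omega
      have hceq : lmin (max x0 (x - (n:ℤ) - 1)) x = lmin (max x0 (x - (n:ℤ))) x := by omega
      refine ⟨x, (hcondiff x hx).mp ⟨hceq, ?_⟩, by rw [← hyeq]⟩
      simp only [hs] at *
      omega
    · rintro ⟨x', hxmem, heq⟩
      obtain ⟨rfl, rfl⟩ : x' = x ∧ lmin (max x0 (x' - (n:ℤ))) x' + (n:ℤ) - x' = y := by
        simpa [Prod.ext_iff] using heq
      have hx : x0 ≤ x' := by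
        rcases hxmem with h | ⟨w, hwQ, hwx⟩
        · exact (Set.mem_Icc.mp h).1
        · have h1 : x0 < w := hwQ.1.1
          have h2 : w + (n:ℤ) = x' := hwx
          omega
      obtain ⟨hceq, hle⟩ := (hcondiff x' hx).mpr hxmem
      have hyr : r x' ≤ lmin (max x0 (x' - (n:ℤ))) x' + (n:ℤ) - x' := by omega
      have hpW : (x', lmin (max x0 (x' - (n:ℤ))) x' + (n:ℤ) - x') ∈ W := (hcol _ _ hx).mpr hyr
      refine ⟨hpW, (hDn n x' _ hx hyr).mpr (by omega), ?_⟩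
      intro hcon
      have := (hDn (n+1) x' _ hx hyr).mp hcon
      push_cast at this
      rw [show x' - ((n:ℤ) + 1) = x' - (n:ℤ) - 1 from by ring] at this
      omega
  -- counting
  have hinj : Function.Injective (fun x : ℤ => (x, lmin (max x0 (x - (n:ℤ))) x + (n:ℤ) - x)) :=
    fun a b hab => congrArg Prod.fst hab
  have hfin1 : (Set.Icc x0 (x0 + (n:ℤ)) ∪ (fun w => w + (n:ℤ)) '' Qs).Finite :=
    (Set.finite_Icc _ _).union (hQsfin.image _)
  have hEfin : {p ∈ W | DnZ W n p ∧ ¬ DnZ W (n+1) p}.Finite := by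
    rw [hE]; exact hfin1.image _
  refine ⟨hEfin, ?_⟩
  have hdisj : Disjoint (Set.Icc x0 (x0 + (n:ℤ))) ((fun w => w + (n:ℤ)) '' Qs) := by
    rw [Set.disjoint_left]
    rintro x hx ⟨w, hwQ, rfl⟩
    simp only [hQs, Set.mem_setOf_eq, Set.mem_Ioc] at hwQ
    simp only [Set.mem_Icc] at hx
    omega
  rw [hE, Set.ncard_image_of_injective _ hinj,
    Set.ncard_union_eq hdisj (Set.finite_Icc _ _) (hQsfin.image _),
    Set.ncard_image_of_injective _ (add_left_injective _)]
  rw [← Finset.coe_Icc, Set.ncard_coe_finset, Int.card_Icc]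
  have : (x0 + (n:ℤ) + 1 - x0).toNat = n + 1 := by omega
  rw [this]
  push_cast
  ring

theorem DnZ_def (W : Set (ℤ × ℤ)) (n : ℕ) (p : ℤ × ℤ) :
    DnZ W n p ↔ ∃ i j : ℕ, i + j = n ∧ ((p.1 - i, p.2 - j) ∈ W) := Iff.rfl

/-- `DM a b M n m` : `m` can be reduced `n` times by steps `(a,0)`, `(0,b)` inside `M`. -/
def DM (a b : ℕ) (M : Set (ℤ × ℤ)) (n : ℕ) (m : ℤ × ℤ) : Prop :=
  ∃ i j : ℕ, i + j = n ∧ ((m.1 - i * a, m.2 - j * b) ∈ M)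

theorem combin (a b : ℕ) (ha : 0 < a) (hb : 0 < b) (t : ℕ) (p q : Fin t → ℕ)
    (M : AddSubmonoid (ℤ × ℤ))
    (hM : M = AddSubmonoid.closure
      ({((a:ℤ), (0:ℤ)), ((0:ℤ), (b:ℤ))} ∪ Set.range fun i => ((p i : ℤ), (q i : ℤ))))
    (H : AddSubgroup (ZMod a × ZMod b))
    (hH : H = AddSubgroup.closure (Set.range fun i => ((p i : ZMod a), (q i : ZMod b)))) :
    (∀ n : ℕ, {m ∈ (M : Set (ℤ × ℤ)) | ¬ DM a b M n m}.Finite) ∧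
    ∃ C : ℤ, ∃ N : ℕ, ∀ n : ℕ, N ≤ n →
      {m ∈ (M : Set (ℤ × ℤ)) | DM a b M n m ∧ ¬ DM a b M (n+1) m}.Finite ∧
      ({m ∈ (M : Set (ℤ × ℤ)) | DM a b M n m ∧ ¬ DM a b M (n+1) m}.ncard : ℤ)
        = (Nat.card H : ℤ) * ((n : ℤ) + 1) + C := by
  classical
  haveI : NeZero a := ⟨ha.ne'⟩
  haveI : NeZero b := ⟨hb.ne'⟩
  -- the reduction map
  set π : ℤ × ℤ →+ ZMod a × ZMod b :=
    AddMonoidHom.prodMap (Int.castAddHom (ZMod a)) (Int.castAddHom (ZMod b)) with hπ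
  -- membership facts
  have hαM : ((a:ℤ), (0:ℤ)) ∈ M := hM ▸ AddSubmonoid.subset_closure (Or.inl (Or.inl rfl))
  have hβM : ((0:ℤ), (b:ℤ)) ∈ M := hM ▸ AddSubmonoid.subset_closure (Or.inl (Or.inr rfl))
  -- nonnegativity of members
  have hnn : ∀ m ∈ M, 0 ≤ m.1 ∧ 0 ≤ m.2 := by
    intro m hm
    rw [hM] at hm
    induction hm using AddSubmonoid.closure_induction with
    | mem x hx =>
        rcases hx with (h | h) | ⟨i, rfl⟩
        · rw [h]; constructor <;> simp
        · rw [h]; constructor <;> simp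
        · constructor <;> simp
    | zero => exact ⟨le_rfl, le_rfl⟩
    | add x y hx hy ihx ihy =>
        exact ⟨by simpa using add_nonneg ihx.1 ihy.1, by simpa using add_nonneg ihx.2 ihy.2⟩
  -- the classes of M form exactly H
  have hπa : ∀ x : ℤ, (((a:ℤ) * x : ℤ) : ZMod a) = 0 := by
    intro x
    rw [ZMod.intCast_zmod_eq_zero_iff_dvd]
    exact ⟨x, rfl⟩
  have hπb : ∀ x : ℤ, (((b:ℤ) * x : ℤ) : ZMod b) = 0 := by
    intro x
    rw [ZMod.intCast_zmod_eq_zero_iff_dvd]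
    exact ⟨x, rfl⟩
  have hπapp : ∀ m : ℤ × ℤ, π m = ((m.1 : ZMod a), (m.2 : ZMod b)) := fun m => rfl
  have hmapM : AddSubmonoid.map π M = H.toAddSubmonoid := by
    rw [hM, AddMonoidHom.map_mclosure]
    have himg : π '' ({((a:ℤ), (0:ℤ)), ((0:ℤ), (b:ℤ))} ∪ Set.range fun i => ((p i : ℤ), (q i : ℤ)))
        = {(0 : ZMod a × ZMod b)} ∪ Set.range fun i => ((p i : ZMod a), (q i : ZMod b)) := by
      rw [Set.image_union]
      congr 1
      · have h1 : π ((a:ℤ), (0:ℤ)) = 0 := by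
          rw [hπapp]
          have := hπa 1
          rw [mul_one] at this
          simp [this]
        have h2 : π ((0:ℤ), (b:ℤ)) = 0 := by
          rw [hπapp]
          have := hπb 1
          rw [mul_one] at this
          simp [this]
        rw [Set.image_pair, h1, h2]
        simp
      · rw [← Set.range_comp]
        have hfun : (⇑π ∘ fun i => ((p i : ℤ), (q i : ℤ)))
            = fun i => ((p i : ZMod a), (q i : ZMod b)) := by
          funext i
          rw [Function.comp_apply, hπapp]
          simp
        rw [hfun]
    rw [himg]
    have h0 : AddSubmonoid.closure
        ({(0 : ZMod a × ZMod b)} ∪ Set.range fun i => ((p i : ZMod a), (q i : ZMod b)))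
        = AddSubmonoid.closure (Set.range fun i => ((p i : ZMod a), (q i : ZMod b))) := by
      rw [AddSubmonoid.closure_union]
      rw [AddSubmonoid.closure_singleton_zero, bot_sup_eq]
    rw [h0]
    apply le_antisymm
    · rw [AddSubmonoid.closure_le]
      intro x hx
      exact (hH ▸ AddSubgroup.subset_closure hx : x ∈ H)
    · have hneg : ∀ x ∈ AddSubmonoid.closure (Set.range fun i => ((p i : ZMod a), (q i : ZMod b))),
          -x ∈ AddSubmonoid.closure (Set.range fun i => ((p i : ZMod a), (q i : ZMod b))) := by
        intro x hx
        have h1 : addOrderOf x • x = 0 := addOrderOf_nsmul_eq_zero x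
        have h2 : addOrderOf x > 0 := addOrderOf_pos x
        have h3 : (addOrderOf x - 1) • x + x = 0 := by
          rw [← succ_nsmul]
          have he : addOrderOf x - 1 + 1 = addOrderOf x := by omega
          rw [he, h1]
        have h4 : -x = (addOrderOf x - 1) • x := neg_eq_of_add_eq_zero_left h3
        rw [h4]
        exact nsmul_mem hx _
      set H₂ : AddSubgroup (ZMod a × ZMod b) :=
        { AddSubmonoid.closure (Set.range fun i => ((p i : ZMod a), (q i : ZMod b))) with
          neg_mem' := fun hx => hneg _ hx } with hH₂
      intro x hx
      have hle : H ≤ H₂ := by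
        rw [hH]
        exact (AddSubgroup.closure_le H₂).mpr (fun y hy => AddSubmonoid.subset_closure hy)
      exact hle hx
  have hclassH : ∀ m ∈ M, π m ∈ H := by
    intro m hm
    have : π m ∈ AddSubmonoid.map π M := ⟨m, hm, rfl⟩
    rw [hmapM] at this
    exact this
  have hHsurj : ∀ h ∈ H, ∃ m ∈ M, π m = h := by
    intro h hh
    have : h ∈ AddSubmonoid.map π M := by rw [hmapM]; exact hh
    obtain ⟨m, hm, hmh⟩ := this
    exact ⟨m, hm, hmh⟩
  -- per-class analysis
  have hper : ∀ h : ZMod a × ZMod b, ∃ CN : ℤ × ℕ, h ∈ H →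
      (∀ n : ℕ, {m ∈ (M : Set (ℤ × ℤ)) | π m = h ∧ ¬ DM a b (M : Set (ℤ × ℤ)) n m}.Finite) ∧
      (∀ n : ℕ, CN.2 ≤ n →
        {m ∈ (M : Set (ℤ × ℤ)) | π m = h ∧ DM a b (M : Set (ℤ × ℤ)) n m
            ∧ ¬ DM a b (M : Set (ℤ × ℤ)) (n+1) m}.Finite ∧
        ({m ∈ (M : Set (ℤ × ℤ)) | π m = h ∧ DM a b (M : Set (ℤ × ℤ)) n m
            ∧ ¬ DM a b (M : Set (ℤ × ℤ)) (n+1) m}.ncard : ℤ) = (n : ℤ) + 1 + CN.1) := by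
    intro h
    by_cases hmem : h ∈ H
    swap
    · exact ⟨(0, 0), fun hmem' => absurd hmem' hmem⟩
    obtain ⟨mh, hmhM, hmhπ⟩ := hHsurj h hmem
    set Φ : ℤ × ℤ → ℤ × ℤ := fun w => (mh.1 + a * w.1, mh.2 + b * w.2) with hΦ
    set Wh : Set (ℤ × ℤ) := {w | Φ w ∈ M} with hWhdef
    have ha1 : (1 : ℤ) ≤ (a : ℤ) := by exact_mod_cast ha
    have hb1 : (1 : ℤ) ≤ (b : ℤ) := by exact_mod_cast hb
    -- core hypotheses
    have hW1 : ∀ w ∈ Wh, (w.1 + 1, w.2) ∈ Wh := by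
      intro w hw
      have h1 : Φ w + ((a:ℤ), (0:ℤ)) ∈ M := M.add_mem hw hαM
      have h2 : Φ (w.1 + 1, w.2) = Φ w + ((a:ℤ), (0:ℤ)) := by
        simp only [hΦ, Prod.mk_add_mk, Prod.ext_iff]
        constructor <;> ring
      show Φ (w.1 + 1, w.2) ∈ M
      rw [h2]; exact h1
    have hW2 : ∀ w ∈ Wh, (w.1, w.2 + 1) ∈ Wh := by
      intro w hw
      have h1 : Φ w + ((0:ℤ), (b:ℤ)) ∈ M := M.add_mem hw hβM
      have h2 : Φ (w.1, w.2 + 1) = Φ w + ((0:ℤ), (b:ℤ)) := by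
        simp only [hΦ, Prod.mk_add_mk, Prod.ext_iff]
        constructor <;> ring
      show Φ (w.1, w.2 + 1) ∈ M
      rw [h2]; exact h1
    have hWA : ∀ w ∈ Wh, min 0 (min (-mh.1) (-mh.2)) ≤ w.1 ∧ min 0 (min (-mh.1) (-mh.2)) ≤ w.2 := by
      intro w hw
      have h1 := hnn _ hw
      simp only [hΦ] at h1
      constructor
      · rcases le_or_gt 0 w.1 with h | h
        · exact le_trans (min_le_left _ _) h
        · have h2 : (a:ℤ) * w.1 ≤ 1 * w.1 := mul_le_mul_of_nonpos_right ha1 h.le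
          have : -mh.1 ≤ w.1 := by linarith [h1.1]
          exact le_trans (le_trans (min_le_right _ _) (min_le_left _ _)) this
      · rcases le_or_gt 0 w.2 with h | h
        · exact le_trans (min_le_left _ _) h
        · have h2 : (b:ℤ) * w.2 ≤ 1 * w.2 := mul_le_mul_of_nonpos_right hb1 h.le
          have : -mh.2 ≤ w.2 := by linarith [h1.2]
          exact le_trans (le_trans (min_le_right _ _) (min_le_right _ _)) this
    have hWne : Wh.Nonempty := by
      refine ⟨(0, 0), ?_⟩
      show Φ (0, 0) ∈ M
      have : Φ (0, 0) = mh := by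
        simp only [hΦ, Prod.ext_iff]
        constructor <;> simp
      rw [this]; exact hmhM
    obtain ⟨hFinW, C, N, hCN⟩ := coreStair Wh _ hW1 hW2 hWA hWne
    refine ⟨(C, N), fun _ => ?_⟩
    -- transfer along Φ
    have hΦinj : Function.Injective Φ := by
      intro w w' hww
      simp only [hΦ, Prod.ext_iff] at hww
      have h1 : (a:ℤ) * w.1 = (a:ℤ) * w'.1 := by linarith [hww.1]
      have h2 : (b:ℤ) * w.2 = (b:ℤ) * w'.2 := by linarith [hww.2]
      have h3 : w.1 = w'.1 := by
        have := mul_left_cancel₀ (by positivity : (a:ℤ) ≠ 0) h1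
        exact this
      have h4 : w.2 = w'.2 := by
        have := mul_left_cancel₀ (by positivity : (b:ℤ) ≠ 0) h2
        exact this
      exact Prod.ext h3 h4
    have hΦclass : ∀ w : ℤ × ℤ, π (Φ w) = h := by
      intro w
      rw [hπapp]
      have h1 : ((mh.1 + (a:ℤ) * w.1 : ℤ) : ZMod a) = ((mh.1 : ℤ) : ZMod a) := by
        rw [Int.cast_add, hπa, add_zero]
      have h2 : ((mh.2 + (b:ℤ) * w.2 : ℤ) : ZMod b) = ((mh.2 : ℤ) : ZMod b) := by
        rw [Int.cast_add, hπb, add_zero]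
      show (((mh.1 + (a:ℤ) * w.1 : ℤ) : ZMod a), ((mh.2 + (b:ℤ) * w.2 : ℤ) : ZMod b)) = h
      rw [h1, h2, ← hmhπ, hπapp]
    have hΦsurj : ∀ m ∈ M, π m = h → ∃ w, Φ w = m := by
      intro m hmM hmh
      have h1 : ((m.1 : ℤ) : ZMod a) = ((mh.1 : ℤ) : ZMod a) := by
        have := hmh.trans hmhπ.symm
        rw [hπapp, hπapp, Prod.ext_iff] at this
        exact this.1
      have h2 : ((m.2 : ℤ) : ZMod b) = ((mh.2 : ℤ) : ZMod b) := by
        have := hmh.trans hmhπ.symm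
        rw [hπapp, hπapp, Prod.ext_iff] at this
        exact this.2
      have h3 : ((a:ℕ):ℤ) ∣ mh.1 - m.1 := ((ZMod.intCast_eq_intCast_iff _ _ _).mp h1).dvd
      have h4 : ((b:ℕ):ℤ) ∣ mh.2 - m.2 := ((ZMod.intCast_eq_intCast_iff _ _ _).mp h2).dvd
      obtain ⟨x, hx⟩ := h3
      obtain ⟨y, hy⟩ := h4
      refine ⟨(-x, -y), ?_⟩
      simp only [hΦ, Prod.ext_iff]
      constructor <;> [linear_combination hx; linear_combination hy]
    have hpt : ∀ (w : ℤ × ℤ) (i j : ℕ),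
        ((Φ w).1 - i * a, (Φ w).2 - j * b) = Φ (w.1 - i, w.2 - j) := by
      intro w i j
      simp only [hΦ, Prod.ext_iff]
      constructor <;> ring
    have hDMiff : ∀ (w : ℤ × ℤ) (n : ℕ), (DM a b (M : Set (ℤ × ℤ)) n (Φ w) ↔ DnZ Wh n w) := by
      intro w n
      rw [DnZ_def]
      unfold DM
      refine exists_congr fun i => exists_congr fun j => and_congr_right fun _ => ?_
      rw [hpt]
      exact Iff.rfl
    -- the class set equals the image of the core set
    have hEeq : ∀ (P : Set (ℤ × ℤ)) , True → True := fun _ _ => trivial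
    have hFset : ∀ n : ℕ,
        {m ∈ (M : Set (ℤ × ℤ)) | π m = h ∧ ¬ DM a b (M : Set (ℤ × ℤ)) n m}
          = Φ '' {w ∈ Wh | ¬ DnZ Wh n w} := by
      intro n
      ext m
      simp only [Set.mem_setOf_eq, Set.mem_image]
      constructor
      · rintro ⟨hmM, hmh, hmd⟩
        obtain ⟨w, rfl⟩ := hΦsurj m hmM hmh
        exact ⟨w, ⟨hmM, fun hc => hmd ((hDMiff w n).mpr hc)⟩, rfl⟩
      · rintro ⟨w, ⟨hwW, hwd⟩, rfl⟩
        exact ⟨hwW, hΦclass w, fun hc => hwd ((hDMiff w n).mp hc)⟩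
    have hEset : ∀ n : ℕ,
        {m ∈ (M : Set (ℤ × ℤ)) | π m = h ∧ DM a b (M : Set (ℤ × ℤ)) n m
            ∧ ¬ DM a b (M : Set (ℤ × ℤ)) (n+1) m}
          = Φ '' {w ∈ Wh | DnZ Wh n w ∧ ¬ DnZ Wh (n+1) w} := by
      intro n
      ext m
      simp only [Set.mem_setOf_eq, Set.mem_image]
      constructor
      · rintro ⟨hmM, hmh, hmd1, hmd2⟩
        obtain ⟨w, rfl⟩ := hΦsurj m hmM hmh
        exact ⟨w, ⟨hmM, (hDMiff w n).mp hmd1, fun hc => hmd2 ((hDMiff w (n+1)).mpr hc)⟩, rfl⟩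
      · rintro ⟨w, ⟨hwW, hwd1, hwd2⟩, rfl⟩
        exact ⟨hwW, hΦclass w, (hDMiff w n).mpr hwd1, fun hc => hwd2 ((hDMiff w (n+1)).mp hc)⟩
    constructor
    · intro n
      rw [hFset n]
      exact (hFinW n).image _
    · intro n hn
      obtain ⟨hfin, hcard⟩ := hCN n hn
      constructor
      · rw [hEset n]
        exact hfin.image _
      · rw [hEset n, Set.ncard_image_of_injective _ hΦinj, hcard]
  choose CN hCNs using hper
  set t0 : Finset (ZMod a × ZMod b) := (H : Set (ZMod a × ZMod b)).toFinset with ht0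
  have hmemt0 : ∀ {h : ZMod a × ZMod b}, h ∈ t0 ↔ h ∈ H := by
    intro h; rw [ht0, Set.mem_toFinset]; exact Iff.rfl
  constructor
  · intro n
    have hcover : {m ∈ (M : Set (ℤ × ℤ)) | ¬ DM a b (M : Set (ℤ × ℤ)) n m}
        = ⋃ h ∈ t0, {m ∈ (M : Set (ℤ × ℤ)) | π m = h ∧ ¬ DM a b (M : Set (ℤ × ℤ)) n m} := by
      ext m
      simp only [Set.mem_setOf_eq, Set.mem_iUnion]
      constructor
      · rintro ⟨hmM, hmd⟩
        exact ⟨π m, hmemt0.mpr (hclassH m hmM), hmM, rfl, hmd⟩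
      · rintro ⟨h, _, hmM, _, hmd⟩
        exact ⟨hmM, hmd⟩
    rw [hcover]
    apply Set.Finite.biUnion t0.finite_toSet
    intro h hh
    exact (hCNs h (hmemt0.mp hh)).1 n
  · refine ⟨∑ h ∈ t0, (CN h).1, t0.sup (fun h => (CN h).2), ?_⟩
    intro n hn
    have hcover : {m ∈ (M : Set (ℤ × ℤ)) | DM a b (M : Set (ℤ × ℤ)) n m
          ∧ ¬ DM a b (M : Set (ℤ × ℤ)) (n+1) m}
        = ⋃ h ∈ t0, {m ∈ (M : Set (ℤ × ℤ)) | π m = h ∧ DM a b (M : Set (ℤ × ℤ)) n m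
          ∧ ¬ DM a b (M : Set (ℤ × ℤ)) (n+1) m} := by
      ext m
      simp only [Set.mem_setOf_eq, Set.mem_iUnion]
      constructor
      · rintro ⟨hmM, hmd⟩
        exact ⟨π m, hmemt0.mpr (hclassH m hmM), hmM, rfl, hmd⟩
      · rintro ⟨h, _, hmM, _, hmd⟩
        exact ⟨hmM, hmd⟩
    have hEfin : {m ∈ (M : Set (ℤ × ℤ)) | DM a b (M : Set (ℤ × ℤ)) n m
        ∧ ¬ DM a b (M : Set (ℤ × ℤ)) (n+1) m}.Finite := by
      rw [hcover]
      apply Set.Finite.biUnion t0.finite_toSet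
      intro h hh
      exact ((hCNs h (hmemt0.mp hh)).2 n (le_trans (Finset.le_sup (f := fun h => (CN h).2) hh) hn)).1
    refine ⟨hEfin, ?_⟩
    set s : Finset (ℤ × ℤ) := hEfin.toFinset with hsdef
    have hcards : {m ∈ (M : Set (ℤ × ℤ)) | DM a b (M : Set (ℤ × ℤ)) n m
        ∧ ¬ DM a b (M : Set (ℤ × ℤ)) (n+1) m}.ncard = s.card := by
      rw [← Set.ncard_coe_finset, hsdef, Set.Finite.coe_toFinset]
    have hfib : s.card = ∑ h ∈ t0, (s.filter (fun m => π m = h)).card := by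
      apply Finset.card_eq_sum_card_fiberwise
      intro m hm
      rw [hsdef, Finset.mem_coe, Set.Finite.mem_toFinset] at hm
      exact Finset.mem_coe.mpr (hmemt0.mpr (hclassH m hm.1))
    have hfibcard : ∀ h ∈ t0, ((s.filter (fun m => π m = h)).card : ℤ)
        = (n : ℤ) + 1 + (CN h).1 := by
      intro h hh
      have h2 := (hCNs h (hmemt0.mp hh)).2 n (le_trans (Finset.le_sup (f := fun h => (CN h).2) hh) hn)
      have hset : (↑(s.filter (fun m => π m = h)) : Set (ℤ × ℤ))
          = {m ∈ (M : Set (ℤ × ℤ)) | π m = h ∧ DM a b (M : Set (ℤ × ℤ)) n m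
              ∧ ¬ DM a b (M : Set (ℤ × ℤ)) (n+1) m} := by
        ext m
        rw [Finset.coe_filter]
        simp only [Set.mem_setOf_eq, hsdef, Set.Finite.mem_toFinset]
        constructor
        · rintro ⟨⟨hmM, hmd⟩, hmh⟩
          exact ⟨hmM, hmh, hmd⟩
        · rintro ⟨hmM, hmh, hmd⟩
          exact ⟨⟨hmM, hmd⟩, hmh⟩
      rw [← Set.ncard_coe_finset, hset, h2.2]
    have hHcard : (Nat.card H : ℤ) = (t0.card : ℤ) := by
      have h1 : Nat.card H = (H : Set (ZMod a × ZMod b)).ncard :=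
        Nat.card_coe_set_eq (H : Set (ZMod a × ZMod b))
      rw [h1, ht0, Set.ncard_eq_toFinset_card']
    calc ({m ∈ (M : Set (ℤ × ℤ)) | DM a b (M : Set (ℤ × ℤ)) n m
          ∧ ¬ DM a b (M : Set (ℤ × ℤ)) (n+1) m}.ncard : ℤ)
        = (s.card : ℤ) := by rw [hcards]
      _ = ∑ h ∈ t0, ((s.filter (fun m => π m = h)).card : ℤ) := by
          rw [hfib]; push_cast; ring
      _ = ∑ h ∈ t0, ((n : ℤ) + 1 + (CN h).1) := Finset.sum_congr rfl hfibcard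
      _ = t0.card • ((n : ℤ) + 1) + ∑ h ∈ t0, (CN h).1 := by
          rw [Finset.sum_add_distrib, Finset.sum_const]
      _ = (Nat.card H : ℤ) * ((n : ℤ) + 1) + ∑ h ∈ t0, (CN h).1 := by
          rw [nsmul_eq_mul, hHcard]



/-- Membership in the span of a set of monomials is detected by coefficients. -/
theorem span_mono_coeff (k : Type*) [Field k] (S : Set (Fin 2 →₀ ℕ)) (x : MvPolynomial (Fin 2) k) :
    x ∈ Submodule.span k ((fun d => (monomial d (1:k))) '' S) ↔
      ∀ d ∉ S, MvPolynomial.coeff d x = 0 := by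
  constructor
  · intro hx
    induction hx using Submodule.span_induction with
    | mem y hy =>
        obtain ⟨e, heS, rfl⟩ := hy
        intro d hd
        rw [coeff_monomial]
        exact if_neg (fun h : e = d => hd (h ▸ heS))
    | zero => intro d _; rw [coeff_zero]
    | add y z _ _ ihy ihz => intro d hd; rw [coeff_add, ihy d hd, ihz d hd, add_zero]
    | smul c y _ ihy => intro d hd; rw [coeff_smul, ihy d hd, smul_zero]
  · intro h
    rw [as_sum x]
    apply Submodule.sum_mem
    intro v hv
    have hvS : v ∈ S := by
      by_contra hvn
      exact (mem_support_iff.mp hv) (h v hvn)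
    have : monomial v (coeff v x) = (coeff v x) • (monomial v (1:k)) := by
      rw [smul_monomial, smul_eq_mul, mul_one]
    rw [this]
    exact Submodule.smul_mem _ _ (Submodule.subset_span ⟨v, hvS, rfl⟩)

/-- The dimension of a quotient of a "monomial subalgebra" by a "monomial ideal". -/
theorem finrank_quot_monomial (k : Type*) [Field k] (R : Subalgebra k (MvPolynomial (Fin 2) k))
    (S T : Set (Fin 2 →₀ ℕ)) (hTS : T ⊆ S)
    (hR : Subalgebra.toSubmodule R
      = Submodule.span k ((fun d => (monomial d (1:k))) '' S))
    (J : Ideal R)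
    (hJ : ∀ x : R, x ∈ J ↔
      (x : MvPolynomial (Fin 2) k) ∈ Submodule.span k ((fun d => (monomial d (1:k))) '' T))
    (hfin : (S \ T).Finite) :
    Module.finrank k (R ⧸ J) = (S \ T).ncard := by
  classical
  set θ : R →ₗ[k] (↥(S \ T) →₀ k) :=
    (Finsupp.lsubtypeDomain (M := k) (R := k) (S \ T)).comp
      ((AddMonoidAlgebra.coeffLinearEquiv k).toLinearMap.comp ((Subalgebra.toSubmodule R).subtype)) with hθ
  have hθapp : ∀ (x : R) (d : ↥(S \ T)),
      θ x d = MvPolynomial.coeff (d : Fin 2 →₀ ℕ) (x : MvPolynomial (Fin 2) k) := fun _ _ => rfl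
  have hmemR : ∀ x : R, (x : MvPolynomial (Fin 2) k)
      ∈ Submodule.span k ((fun d => (monomial d (1:k))) '' S) := by
    intro x
    rw [← hR]
    exact x.2
  -- kernel computation
  have hker : LinearMap.ker θ = J.restrictScalars k := by
    ext x
    rw [LinearMap.mem_ker, Submodule.restrictScalars_mem, hJ, span_mono_coeff]
    constructor
    · intro h0 d hd
      rcases em (d ∈ S) with hdS | hdS
      · have := congrFun (congrArg DFunLike.coe h0) ⟨d, hdS, hd⟩
        rw [hθapp] at this
        simpa using this
      · exact (span_mono_coeff k S _).mp (hmemR x) d hdS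
    · intro h
      ext d
      rw [hθapp]
      exact h d d.2.2
  -- surjectivity
  have hsurj : Function.Surjective θ := by
    intro f
    induction f using Finsupp.induction with
    | zero => exact ⟨0, map_zero θ⟩
    | single_add d c f _ _ ih =>
        obtain ⟨y, hy⟩ := ih
        have hdR : (monomial (d : Fin 2 →₀ ℕ) (1:k)) ∈ R := by
          have : (monomial (d : Fin 2 →₀ ℕ) (1:k)) ∈ Subalgebra.toSubmodule R := by
            rw [hR]
            exact Submodule.subset_span ⟨d, d.2.1, rfl⟩
          exact this
        set rd : R := ⟨monomial (d : Fin 2 →₀ ℕ) (1:k), hdR⟩ with hrd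
        have hθrd : θ rd = Finsupp.single d 1 := by
          ext e
          rw [hθapp, Finsupp.single_apply]
          show MvPolynomial.coeff (e : Fin 2 →₀ ℕ) (monomial (d : Fin 2 →₀ ℕ) (1:k)) = _
          rw [coeff_monomial]
          by_cases h : d = e
          · rw [if_pos h, if_pos (by rw [h])]
          · rw [if_neg h, if_neg (fun hc => h (Subtype.ext hc))]
        refine ⟨c • rd + y, ?_⟩
        rw [map_add, map_smul, hθrd, hy, Finsupp.smul_single, smul_eq_mul, mul_one]
  -- assemble
  haveI : Fintype ↥(S \ T) := hfin.fintype
  have e1 : Module.finrank k (R ⧸ J) = Module.finrank k (R ⧸ (J.restrictScalars k)) :=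
    (Submodule.Quotient.restrictScalarsEquiv k J).symm.finrank_eq
  have e2 : Module.finrank k (R ⧸ (J.restrictScalars k)) = Module.finrank k (↥(S \ T) →₀ k) := by
    rw [← hker]
    exact (LinearMap.quotKerEquivOfSurjective θ hsurj).finrank_eq
  rw [e1, e2, Module.finrank_finsupp_self, ← Nat.card_coe_set_eq, Nat.card_eq_fintype_card]

/-- For `R = k[xᵃ, x^{p₁}y^{q₁}, …, x^{p_t}y^{q_t}, yᵇ]`, the Hilbert–Samuel multiplicity of
the parameter ideal `(xᵃ, yᵇ)` equals `|H|`, where `H ≤ (ℤ/a) ⊕ (ℤ/b)` is generated by the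
classes of the `(pᵢ, qᵢ)`.  The multiplicity is expressed via the associated graded Hilbert
function: eventually `λ(R/I^{n+1}) - λ(R/I^n) = |H|·(n+1) + C` for some constant `C`. -/
theorem stmt_3 (k : Type*) [Field k] (a b t : ℕ) (ha : 0 < a) (hb : 0 < b)
    (p q : Fin t → ℕ)
    (R : Subalgebra k (MvPolynomial (Fin 2) k))
    (hR : R = Algebra.adjoin k
      (({X 0 ^ a, X 1 ^ b} ∪ Set.range fun i => X 0 ^ (p i) * X 1 ^ (q i)) :
        Set (MvPolynomial (Fin 2) k)))
    (xa yb : R)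
    (hxa : (xa : MvPolynomial (Fin 2) k) = X 0 ^ a)
    (hyb : (yb : MvPolynomial (Fin 2) k) = X 1 ^ b)
    (H : AddSubgroup (ZMod a × ZMod b))
    (hH : H = AddSubgroup.closure (Set.range fun i => ((p i : ZMod a), (q i : ZMod b)))) :
    ∃ (C : ℤ) (N : ℕ), ∀ n ≥ N,
      (Module.finrank k (R ⧸ (Ideal.span {xa, yb} : Ideal R) ^ (n + 1)) : ℤ)
        = (Module.finrank k (R ⧸ (Ideal.span {xa, yb} : Ideal R) ^ n) : ℤ)
          + (Nat.card H : ℤ) * ((n : ℤ) + 1) + C := by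
  classical
  set mono : (Fin 2 →₀ ℕ) → MvPolynomial (Fin 2) k := fun d => monomial d 1 with hmono
  set α : Fin 2 →₀ ℕ := Finsupp.single 0 a with hα
  set β : Fin 2 →₀ ℕ := Finsupp.single 1 b with hβ
  set γ : Fin t → (Fin 2 →₀ ℕ) := fun i => Finsupp.single 0 (p i) + Finsupp.single 1 (q i) with hγ
  set Msub : AddSubmonoid (Fin 2 →₀ ℕ) := AddSubmonoid.closure ({α, β} ∪ Set.range γ) with hMsub
  have hmα : mono α = X 0 ^ a := X_pow_eq_monomial.symm
  have hmβ : mono β = X 1 ^ b := X_pow_eq_monomial.symm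
  have hmγ : ∀ i, mono (γ i) = X 0 ^ (p i) * X 1 ^ (q i) := by
    intro i
    rw [X_pow_eq_monomial, X_pow_eq_monomial, monomial_mul, one_mul]
  have hmul : ∀ d e, mono d * mono e = mono (d + e) := by
    intro d e
    simp only [hmono]
    rw [monomial_mul, one_mul]
  have hone : mono 0 = 1 := by
    simp only [hmono]
    rw [monomial_zero', C_1]
  have hαM : α ∈ Msub := AddSubmonoid.subset_closure (Or.inl (Or.inl rfl))
  have hβM : β ∈ Msub := AddSubmonoid.subset_closure (Or.inl (Or.inr rfl))
  -- R is the span of the monomials of Msub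
  have hsetseq : (↑(Submonoid.closure
        (({X 0 ^ a, X 1 ^ b} ∪ Set.range fun i => X 0 ^ (p i) * X 1 ^ (q i)) :
          Set (MvPolynomial (Fin 2) k))) : Set (MvPolynomial (Fin 2) k))
      = mono '' (Msub : Set (Fin 2 →₀ ℕ)) := by
    apply Set.Subset.antisymm
    · intro v hv
      induction hv using Submonoid.closure_induction with
      | mem y hy =>
          rcases hy with (h | h) | ⟨i, rfl⟩
          · exact ⟨α, hαM, hmα.trans h.symm⟩
          · exact ⟨β, hβM, hmβ.trans h.symm⟩
          · exact ⟨γ i, AddSubmonoid.subset_closure (Or.inr ⟨i, rfl⟩), hmγ i⟩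
      | one => exact ⟨0, zero_mem _, hone⟩
      | mul x y hx hy ihx ihy =>
          obtain ⟨d, hd, rfl⟩ := ihx
          obtain ⟨e, he, rfl⟩ := ihy
          exact ⟨d + e, add_mem hd he, (hmul d e).symm⟩
    · rintro v ⟨d, hd, rfl⟩
      induction hd using AddSubmonoid.closure_induction with
      | mem y hy =>
          rcases hy with (h | h) | ⟨i, rfl⟩
          · rw [h, hmα]
            exact Submonoid.subset_closure (Or.inl (Or.inl rfl))
          · rw [h, hmβ]
            exact Submonoid.subset_closure (Or.inl (Or.inr rfl))
          · rw [hmγ i]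
            exact Submonoid.subset_closure (Or.inr ⟨i, rfl⟩)
      | zero => rw [hone]; exact one_mem _
      | add x y hx hy ihx ihy =>
          rw [← hmul]
          exact mul_mem ihx ihy
  have hspan : Subalgebra.toSubmodule R
      = Submodule.span k (mono '' (Msub : Set (Fin 2 →₀ ℕ))) := by
    rw [hR, Algebra.adjoin_eq_span, hsetseq]
  -- ideal powers are spanned by the pure products of the two generators
  set I : Ideal R := Ideal.span {xa, yb} with hI
  set G : ℕ → Set R := fun n => (fun ij : ℕ × ℕ => xa ^ ij.1 * yb ^ ij.2) '' {ij | ij.1 + ij.2 = n}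
    with hG
  have hIpow : ∀ n, I ^ n = Ideal.span (G n) := by
    intro n
    induction n with
    | zero =>
        rw [pow_zero]
        symm
        rw [Ideal.one_eq_top, Ideal.eq_top_iff_one]
        apply Ideal.subset_span
        exact ⟨(0,0), rfl, by simp⟩
    | succ n ih =>
        rw [pow_succ, ih, hI, Ideal.span_mul_span]
        apply le_antisymm
        · rw [Ideal.span_le]
          intro z hz
          simp only [Set.mem_mul] at hz
          obtain ⟨s, hs, u, hu, rfl⟩ := hz
          obtain ⟨⟨i, j⟩, hij, rfl⟩ := hs
          simp only [Set.mem_setOf_eq] at hij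
          apply Ideal.subset_span
          rcases hu with hu | hu
          · exact ⟨(i+1, j), by simp only [Set.mem_setOf_eq]; omega, by rw [hu]; ring⟩
          · have hu' : u = yb := hu
            exact ⟨(i, j+1), by simp only [Set.mem_setOf_eq]; omega, by rw [hu']; ring⟩
        · rw [Ideal.span_le]
          rintro z ⟨⟨i, j⟩, hij, rfl⟩
          simp only [Set.mem_setOf_eq] at hij
          apply Ideal.subset_span
          simp only [Set.mem_mul]
          rcases i with _ | i'
          · have hj : j = n + 1 := by omega
            subst hj
            exact ⟨xa ^ 0 * yb ^ n, ⟨(0, n), by simp, rfl⟩, yb, Or.inr rfl, by ring⟩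
          · exact ⟨xa ^ i' * yb ^ j, ⟨(i', j), by simp only [Set.mem_setOf_eq]; omega, rfl⟩,
              xa, Or.inl rfl, by ring⟩
  -- the monomial description of the ideal powers
  set Tn : ℕ → Set (Fin 2 →₀ ℕ) :=
    fun n => {d | ∃ i j : ℕ, i + j = n ∧ ∃ e ∈ Msub, d = e + (i • α + j • β)} with hTn
  have hTsub : ∀ n, Tn n ⊆ (Msub : Set (Fin 2 →₀ ℕ)) := by
    rintro n d ⟨i, j, hij, e, he, rfl⟩
    exact add_mem he (add_mem (nsmul_mem hαM i) (nsmul_mem hβM j))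
  have hxapow : ∀ i : ℕ, ((xa ^ i : R) : MvPolynomial (Fin 2) k) = mono (i • α) := by
    intro i
    rw [SubmonoidClass.coe_pow, hxa, X_pow_eq_monomial, monomial_pow, one_pow]
  have hybpow : ∀ j : ℕ, ((yb ^ j : R) : MvPolynomial (Fin 2) k) = mono (j • β) := by
    intro j
    rw [SubmonoidClass.coe_pow, hyb, X_pow_eq_monomial, monomial_pow, one_pow]
  have hRmulspan : ∀ (n : ℕ) (rv : MvPolynomial (Fin 2) k),
      rv ∈ Submodule.span k (mono '' (Msub : Set (Fin 2 →₀ ℕ))) →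
      ∀ v ∈ Submodule.span k (mono '' Tn n), rv * v ∈ Submodule.span k (mono '' Tn n) := by
    intro n rv hr
    induction hr using Submodule.span_induction with
    | mem w hw =>
        obtain ⟨e, he, rfl⟩ := hw
        intro v hv
        induction hv using Submodule.span_induction with
        | mem u hu =>
            obtain ⟨d, hd, rfl⟩ := hu
            obtain ⟨i, j, hij, f, hf, rfl⟩ := hd
            rw [hmul]
            apply Submodule.subset_span
            exact ⟨e + (f + (i • α + j • β)), ⟨i, j, hij, e + f, add_mem he hf, by rw [add_assoc]⟩, rfl⟩
        | zero => rw [mul_zero]; exact zero_mem _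
        | add u w _ _ ihu ihw => rw [mul_add]; exact add_mem ihu ihw
        | smul c u _ ihu => rw [mul_smul_comm]; exact Submodule.smul_mem _ _ ihu
    | zero => intro v hv; rw [zero_mul]; exact zero_mem _
    | add w u _ _ ihw ihu => intro v hv; rw [add_mul]; exact add_mem (ihw v hv) (ihu v hv)
    | smul c w _ ihw =>
        intro v hv
        rw [smul_mul_assoc]
        exact Submodule.smul_mem _ _ (ihw v hv)
  have hJiff : ∀ (n : ℕ) (x : R), x ∈ I ^ n ↔
      ((x : MvPolynomial (Fin 2) k) ∈ Submodule.span k (mono '' Tn n)) := by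
    intro n x
    constructor
    · intro hx
      rw [hIpow n] at hx
      induction hx using Submodule.span_induction with
      | mem z hz =>
          obtain ⟨⟨i, j⟩, hij, rfl⟩ := hz
          simp only [Set.mem_setOf_eq] at hij
          apply Submodule.subset_span
          refine ⟨i • α + j • β, ⟨i, j, hij, 0, zero_mem _, (zero_add _).symm⟩, ?_⟩
          rw [MulMemClass.coe_mul, hxapow, hybpow, hmul]
      | zero => rw [ZeroMemClass.coe_zero]; exact zero_mem _
      | add y z _ _ ihy ihz => rw [AddMemClass.coe_add]; exact add_mem ihy ihz
      | smul r z _ ihz =>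
          have hco : ((r • z : R) : MvPolynomial (Fin 2) k)
              = (r : MvPolynomial (Fin 2) k) * (z : MvPolynomial (Fin 2) k) := by
            rw [smul_eq_mul, MulMemClass.coe_mul]
          rw [hco]
          exact hRmulspan n _ (by rw [← hspan]; exact r.2) _ ihz
    · intro hx
      have hle : Submodule.span k (mono '' Tn n)
          ≤ Submodule.map (R.val.toLinearMap) ((I ^ n).restrictScalars k) := by
        rw [Submodule.span_le]
        rintro v ⟨d, ⟨i, j, hij, e, he, rfl⟩, rfl⟩
        have hmonoe : mono e ∈ R := by
          have : mono e ∈ Subalgebra.toSubmodule R := by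
            rw [hspan]
            exact Submodule.subset_span ⟨e, he, rfl⟩
          exact this
        refine ⟨⟨mono e, hmonoe⟩ * (xa ^ i * yb ^ j), ?_, ?_⟩
        · show _ ∈ I ^ n
          apply Ideal.mul_mem_left
          rw [hIpow n]
          exact Ideal.subset_span ⟨(i, j), hij, rfl⟩
        · show ((⟨mono e, hmonoe⟩ * (xa ^ i * yb ^ j) : R) : MvPolynomial (Fin 2) k)
              = mono (e + (i • α + j • β))
          rw [MulMemClass.coe_mul, MulMemClass.coe_mul, hxapow, hybpow, hmul]
          show mono e * mono (i • α + j • β) = _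
          rw [hmul]
      obtain ⟨y, hy, hyx⟩ := hle hx
      have hyx' : (y : MvPolynomial (Fin 2) k) = (x : MvPolynomial (Fin 2) k) := hyx
      have : y = x := Subtype.coe_injective hyx'
      rw [← this]
      exact hy
  -- the ℤ × ℤ picture
  set M2 : AddSubmonoid (ℤ × ℤ) := AddSubmonoid.closure
    ({((a:ℤ), (0:ℤ)), ((0:ℤ), (b:ℤ))} ∪ Set.range fun i => ((p i : ℤ), (q i : ℤ))) with hM2
  obtain ⟨hFin2, C, N, hcomb⟩ := combin a b ha hb t p q M2 hM2 H hH
  set ψ : (Fin 2 →₀ ℕ) → ℤ × ℤ := fun d => ((d 0 : ℤ), (d 1 : ℤ)) with hψ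
  have hψadd : ∀ d e, ψ (d + e) = ψ d + ψ e := by
    intro d e
    simp only [hψ, Finsupp.add_apply, Prod.mk_add_mk, Prod.ext_iff]
    constructor <;> push_cast <;> ring
  have hψzero : ψ 0 = 0 := by simp [hψ]
  have hψinj : Function.Injective ψ := by
    intro d e h
    simp only [hψ, Prod.ext_iff] at h
    have h0 : d 0 = e 0 := by exact_mod_cast h.1
    have h1 : d 1 = e 1 := by exact_mod_cast h.2
    apply Finsupp.ext
    intro i
    fin_cases i
    · exact h0
    · exact h1
  have hψs0 : ∀ m : ℕ, ψ (Finsupp.single 0 m) = ((m : ℤ), (0 : ℤ)) := by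
    intro m
    simp only [hψ, Prod.ext_iff]
    constructor
    · rw [Finsupp.single_eq_same]
    · rw [Finsupp.single_eq_of_ne (by decide)]
      simp
  have hψs1 : ∀ m : ℕ, ψ (Finsupp.single 1 m) = ((0 : ℤ), (m : ℤ)) := by
    intro m
    simp only [hψ, Prod.ext_iff]
    constructor
    · rw [Finsupp.single_eq_of_ne (by decide)]
      simp
    · rw [Finsupp.single_eq_same]
  have hψα : ψ α = ((a:ℤ), (0:ℤ)) := by rw [hα]; exact hψs0 a
  have hψβ : ψ β = ((0:ℤ), (b:ℤ)) := by rw [hβ]; exact hψs1 b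
  have hψγ : ∀ i, ψ (γ i) = ((p i : ℤ), (q i : ℤ)) := by
    intro i
    simp only [hγ]
    rw [hψadd, hψs0, hψs1, Prod.mk_add_mk, add_zero, zero_add]
  have hψsα : ∀ i : ℕ, ψ (i • α) = ((i : ℤ) * a, (0:ℤ)) := by
    intro i
    rw [hα, Finsupp.smul_single, smul_eq_mul, hψs0]
    exact Prod.ext (by push_cast; ring) rfl
  have hψsβ : ∀ j : ℕ, ψ (j • β) = ((0:ℤ), (j : ℤ) * b) := by
    intro j
    rw [hβ, Finsupp.smul_single, smul_eq_mul, hψs1]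
    exact Prod.ext rfl (by push_cast; ring)
  have hψmem : ∀ d ∈ Msub, ψ d ∈ M2 := by
    intro d hd
    induction hd using AddSubmonoid.closure_induction with
    | mem y hy =>
        rcases hy with (h | h) | ⟨i, rfl⟩
        · rw [h, hψα]; exact AddSubmonoid.subset_closure (Or.inl (Or.inl rfl))
        · rw [h, hψβ]; exact AddSubmonoid.subset_closure (Or.inl (Or.inr rfl))
        · rw [hψγ i]; exact AddSubmonoid.subset_closure (Or.inr ⟨i, rfl⟩)
    | zero => rw [hψzero]; exact zero_mem _
    | add x y hx hy ihx ihy => rw [hψadd]; exact add_mem ihx ihy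
  have hψsur : ∀ m ∈ M2, ∃ d ∈ Msub, ψ d = m := by
    intro m hm
    induction hm using AddSubmonoid.closure_induction with
    | mem y hy =>
        rcases hy with (h | h) | ⟨i, rfl⟩
        · exact ⟨α, hαM, hψα.trans h.symm⟩
        · exact ⟨β, hβM, hψβ.trans h.symm⟩
        · exact ⟨γ i, AddSubmonoid.subset_closure (Or.inr ⟨i, rfl⟩), hψγ i⟩
    | zero => exact ⟨0, zero_mem _, hψzero⟩
    | add x y hx hy ihx ihy =>
        obtain ⟨d, hd, rfl⟩ := ihx
        obtain ⟨e, he, rfl⟩ := ihy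
        exact ⟨d + e, add_mem hd he, hψadd d e⟩
  have hψDM : ∀ (d : Fin 2 →₀ ℕ) (n : ℕ), d ∈ Msub →
      (DM a b (M2 : Set (ℤ × ℤ)) n (ψ d) ↔ d ∈ Tn n) := by
    intro d n hd
    constructor
    · rintro ⟨i, j, hij, hmem⟩
      obtain ⟨e, he, hψe⟩ := hψsur _ hmem
      refine ⟨i, j, hij, e, he, hψinj ?_⟩
      have hc1 : ((e 0 : ℕ) : ℤ) = ((d 0 : ℕ) : ℤ) - (i : ℤ) * (a : ℤ) := congrArg Prod.fst hψe
      have hc2 : ((e 1 : ℕ) : ℤ) = ((d 1 : ℕ) : ℤ) - (j : ℤ) * (b : ℤ) := congrArg Prod.snd hψe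
      rw [hψadd, hψadd, hψsα, hψsβ]
      show ((d 0 : ℤ), (d 1 : ℤ)) = ((e 0 : ℤ), (e 1 : ℤ)) + (((i:ℤ) * a, (0:ℤ)) + ((0:ℤ), (j:ℤ) * b))
      simp only [Prod.mk_add_mk, Prod.ext_iff]
      constructor
      · rw [hc1]; ring
      · rw [hc2]; ring
    · rintro ⟨i, j, hij, e, he, rfl⟩
      refine ⟨i, j, hij, ?_⟩
      have h1 : ((ψ (e + (i • α + j • β))).1 - i * a, (ψ (e + (i • α + j • β))).2 - j * b)
          = ψ e := by
        rw [hψadd, hψadd, hψsα, hψsβ]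
        show ((((e 0 : ℤ), (e 1 : ℤ)) + (((i:ℤ) * a, (0:ℤ)) + ((0:ℤ), (j:ℤ) * b))).1 - i * a,
            (((e 0 : ℤ), (e 1 : ℤ)) + (((i:ℤ) * a, (0:ℤ)) + ((0:ℤ), (j:ℤ) * b))).2 - j * b)
          = ((e 0 : ℤ), (e 1 : ℤ))
        simp only [Prod.mk_add_mk, Prod.ext_iff]
        constructor <;> ring
      rw [h1]
      exact hψmem e he
  have hsetseq2 : ∀ n, ψ '' ((Msub : Set (Fin 2 →₀ ℕ)) \ Tn n)
      = {m ∈ (M2 : Set (ℤ × ℤ)) | ¬ DM a b (M2 : Set (ℤ × ℤ)) n m} := by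
    intro n
    apply Set.Subset.antisymm
    · rintro m ⟨d, ⟨hdM, hdT⟩, rfl⟩
      exact ⟨hψmem d hdM, fun hc => hdT ((hψDM d n hdM).mp hc)⟩
    · rintro m ⟨hm, hnd⟩
      obtain ⟨d, hd, rfl⟩ := hψsur m hm
      exact ⟨d, ⟨hd, fun hT => hnd ((hψDM d n hd).mpr hT)⟩, rfl⟩
  have hfinDn : ∀ n, ((Msub : Set (Fin 2 →₀ ℕ)) \ Tn n).Finite := by
    intro n
    have hf := hFin2 n
    rw [← hsetseq2 n] at hf
    exact Set.Finite.of_finite_image hf hψinj.injOn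
  have hncard : ∀ n, ((Msub : Set (Fin 2 →₀ ℕ)) \ Tn n).ncard
      = {m ∈ (M2 : Set (ℤ × ℤ)) | ¬ DM a b (M2 : Set (ℤ × ℤ)) n m}.ncard := by
    intro n
    rw [← hsetseq2 n, Set.ncard_image_of_injective _ hψinj]
  have hdim : ∀ n, Module.finrank k (R ⧸ I ^ n) = ((Msub : Set (Fin 2 →₀ ℕ)) \ Tn n).ncard :=
    fun n => finrank_quot_monomial k R Msub (Tn n) (hTsub n) hspan (I ^ n) (hJiff n) (hfinDn n)
  -- DM is downward closed in n
  have hα2 : ((a:ℤ), (0:ℤ)) ∈ M2 := AddSubmonoid.subset_closure (Or.inl (Or.inl rfl))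
  have hβ2 : ((0:ℤ), (b:ℤ)) ∈ M2 := AddSubmonoid.subset_closure (Or.inl (Or.inr rfl))
  have hDMstep : ∀ (m : ℤ × ℤ) (n : ℕ),
      DM a b (M2 : Set (ℤ × ℤ)) (n+1) m → DM a b (M2 : Set (ℤ × ℤ)) n m := by
    rintro m n ⟨i, j, hij, hmem⟩
    rcases i with _ | i'
    · have hj : j = n + 1 := by omega
      subst hj
      refine ⟨0, n, by omega, ?_⟩
      have h2 := M2.add_mem hmem hβ2
      have he : (m.1 - ((0:ℕ):ℤ) * a, m.2 - ((n:ℕ):ℤ) * b)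
          = (m.1 - ((0:ℕ):ℤ) * a, m.2 - (((n+1:ℕ)):ℤ) * b) + ((0:ℤ), (b:ℤ)) := by
        simp only [Prod.mk_add_mk, Prod.ext_iff]
        constructor <;> push_cast <;> ring
      rw [he]
      exact h2
    · refine ⟨i', j, by omega, ?_⟩
      have h2 := M2.add_mem hmem hα2
      have he : (m.1 - ((i':ℕ):ℤ) * a, m.2 - ((j:ℕ):ℤ) * b)
          = (m.1 - (((i'+1:ℕ)):ℤ) * a, m.2 - ((j:ℕ):ℤ) * b) + ((a:ℤ), (0:ℤ)) := by
        simp only [Prod.mk_add_mk, Prod.ext_iff]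
        constructor <;> push_cast <;> ring
      rw [he]
      exact h2
  -- conclusion
  refine ⟨C, N, ?_⟩
  intro n hn
  obtain ⟨hEfin, hEcard⟩ := hcomb n hn
  have hsplit : {m ∈ (M2 : Set (ℤ × ℤ)) | ¬ DM a b (M2 : Set (ℤ × ℤ)) (n+1) m}
      = {m ∈ (M2 : Set (ℤ × ℤ)) | ¬ DM a b (M2 : Set (ℤ × ℤ)) n m}
        ∪ {m ∈ (M2 : Set (ℤ × ℤ)) | DM a b (M2 : Set (ℤ × ℤ)) n m
            ∧ ¬ DM a b (M2 : Set (ℤ × ℤ)) (n+1) m} := by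
    ext m
    simp only [Set.mem_setOf_eq, Set.mem_union]
    constructor
    · rintro ⟨hm, hnd⟩
      by_cases hdc : DM a b (M2 : Set (ℤ × ℤ)) n m
      · exact Or.inr ⟨hm, hdc, hnd⟩
      · exact Or.inl ⟨hm, hdc⟩
    · rintro (⟨hm, hnd⟩ | ⟨hm, _, hnd⟩)
      · exact ⟨hm, fun hc => hnd (hDMstep m n hc)⟩
      · exact ⟨hm, hnd⟩
  have hdisj : Disjoint {m ∈ (M2 : Set (ℤ × ℤ)) | ¬ DM a b (M2 : Set (ℤ × ℤ)) n m}
      {m ∈ (M2 : Set (ℤ × ℤ)) | DM a b (M2 : Set (ℤ × ℤ)) n m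
          ∧ ¬ DM a b (M2 : Set (ℤ × ℤ)) (n+1) m} := by
    rw [Set.disjoint_left]
    rintro m ⟨_, hnd⟩ ⟨_, hd, _⟩
    exact hnd hd
  have hcu : {m ∈ (M2 : Set (ℤ × ℤ)) | ¬ DM a b (M2 : Set (ℤ × ℤ)) (n+1) m}.ncard
      = {m ∈ (M2 : Set (ℤ × ℤ)) | ¬ DM a b (M2 : Set (ℤ × ℤ)) n m}.ncard
        + {m ∈ (M2 : Set (ℤ × ℤ)) | DM a b (M2 : Set (ℤ × ℤ)) n m
            ∧ ¬ DM a b (M2 : Set (ℤ × ℤ)) (n+1) m}.ncard := by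
    rw [hsplit, Set.ncard_union_eq hdisj (hFin2 n) hEfin]
  rw [hdim (n+1), hdim n, hncard, hncard, hcu]
  push_cast
  rw [hEcard]
  ring
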